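/- If Borel maps Tₙ: X → X converge to T₀ in measure with respect to μ₀ and μₙ → μ₀ in total variation, then the pushforward measures σₙ of μₙ under x ↦ (x, Tₙ(x)) converge weakly to the pushforward σ₀ of μ₀ under x ↦ (x, T₀(x)). -/

import Mathlib

open MeasureTheory Filter
open scoped ENNReal Topology

private lemma tv_bound {X : Type*} [MeasurableSpace X] (ν μ₀ : Measure X)
    [IsProbabilityMeasure ν] [IsProbabilityMeasure μ₀]
    (g : X → ℝ) (hg : Measurable g) (C : ℝ) (hC : 0 ≤ C) (hgb : ∀ x, |g x| ≤ C) :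
    |∫ x, g x ∂ν - ∫ x, g x ∂μ₀| ≤
      2 * C * ⨆ s : {s : Set X // MeasurableSet s}, |(ν s.1).toReal - (μ₀ s.1).toReal| := by
  set D : ℝ := ⨆ s : {s : Set X // MeasurableSet s}, |(ν s.1).toReal - (μ₀ s.1).toReal| with hD
  have hbdd : BddAbove (Set.range fun s : {s : Set X // MeasurableSet s} =>
      |(ν s.1).toReal - (μ₀ s.1).toReal|) := by
    refine ⟨2, ?_⟩
    rintro r ⟨s, rfl⟩
    have h1 : (ν s.1).toReal ≤ 1 := by
      simpa using ENNReal.toReal_mono (by simp) (prob_le_one (μ := ν) (s := s.1))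
    have h2 : (μ₀ s.1).toReal ≤ 1 := by
      simpa using ENNReal.toReal_mono (by simp) (prob_le_one (μ := μ₀) (s := s.1))
    have h1' : 0 ≤ (ν s.1).toReal := ENNReal.toReal_nonneg
    have h2' : 0 ≤ (μ₀ s.1).toReal := ENNReal.toReal_nonneg
    rw [abs_sub_le_iff]; constructor <;> linarith
  have hDle : ∀ s : Set X, MeasurableSet s → |(ν s).toReal - (μ₀ s).toReal| ≤ D :=
    fun s hs => le_ciSup hbdd ⟨s, hs⟩
  set h : X → ℝ := fun x => g x + C with hh
  have hhm : Measurable h := hg.add_const C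
  have hh_nn : ∀ x, 0 ≤ h x := fun x => by
    have := (abs_le.mp (hgb x)).1; simp [hh]; linarith
  have hh_bdd : ∀ x, h x ≤ 2 * C := fun x => by
    have := (abs_le.mp (hgb x)).2; simp [hh]; linarith
  have hgint : ∀ (m : Measure X) [IsProbabilityMeasure m], Integrable g m := by
    intro m _
    exact (integrable_const C).mono' hg.aestronglyMeasurable
      (Eventually.of_forall fun x => by simpa using hgb x)
  have hhint : ∀ (m : Measure X) [IsProbabilityMeasure m], Integrable h m := by
    intro m _
    exact (hgint m).add (integrable_const C)
  have hkey : ∀ (m : Measure X) [IsProbabilityMeasure m],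
      ∫ x, h x ∂m = ∫ x, g x ∂m + C := by
    intro m _
    rw [hh]
    rw [integral_add (hgint m) (integrable_const C), integral_const]
    simp
  -- layer cake
  have hlay : ∀ (m : Measure X) [IsProbabilityMeasure m],
      ∫ x, h x ∂m = ∫ t in Set.Ioc 0 (2 * C), (m {a | t ≤ h a}).toReal := by
    intro m _
    exact (hhint m).integral_eq_integral_Ioc_meas_le
      (Eventually.of_forall hh_nn) (Eventually.of_forall hh_bdd)
  set Fν : ℝ → ℝ := fun t => (ν {a | t ≤ h a}).toReal with hFν
  set Fμ : ℝ → ℝ := fun t => (μ₀ {a | t ≤ h a}).toReal with hFμ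
  have hanti : ∀ (m : Measure X) [IsProbabilityMeasure m],
      Antitone (fun t => (m {a | t ≤ h a}).toReal) := by
    intro m _ s t hst
    exact ENNReal.toReal_mono (measure_ne_top _ _)
      (measure_mono fun a ha => le_trans hst ha)
  have hFint : ∀ (m : Measure X) [IsProbabilityMeasure m],
      IntegrableOn (fun t => (m {a | t ≤ h a}).toReal) (Set.Ioc 0 (2 * C)) := by
    intro m _
    have hc : IntegrableOn (fun _ : ℝ => (1 : ℝ)) (Set.Ioc 0 (2 * C)) :=
      integrableOn_const measure_Ioc_lt_top.ne
    refine hc.mono'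
      ((hanti m).measurable.aestronglyMeasurable) (Eventually.of_forall fun t => ?_)
    rw [Real.norm_eq_abs, abs_of_nonneg ENNReal.toReal_nonneg]
    simpa using ENNReal.toReal_mono (by simp) (prob_le_one (μ := m) (s := {a | t ≤ h a}))
  have hdiff : ∫ x, g x ∂ν - ∫ x, g x ∂μ₀
      = ∫ t in Set.Ioc 0 (2 * C), (Fν t - Fμ t) := by
    have e1 : ∫ x, g x ∂ν - ∫ x, g x ∂μ₀ = ∫ x, h x ∂ν - ∫ x, h x ∂μ₀ := by
      rw [hkey ν, hkey μ₀]; ring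
    rw [e1, hlay ν, hlay μ₀, integral_sub (hFint ν) (hFint μ₀)]
  rw [hdiff]
  calc |∫ t in Set.Ioc 0 (2 * C), (Fν t - Fμ t)|
      ≤ ∫ t in Set.Ioc 0 (2 * C), |Fν t - Fμ t| := by
        simpa [Real.norm_eq_abs] using
          norm_integral_le_integral_norm (μ := volume.restrict (Set.Ioc 0 (2 * C)))
            (f := fun t => Fν t - Fμ t)
    _ ≤ ∫ t in Set.Ioc 0 (2 * C), D := by
        have hc : IntegrableOn (fun _ : ℝ => D) (Set.Ioc 0 (2 * C)) :=
          integrableOn_const measure_Ioc_lt_top.ne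
        refine integral_mono ((hFint ν).sub (hFint μ₀)).abs hc fun t => ?_
        exact hDle _ (measurableSet_le measurable_const hhm)
    _ = 2 * C * D := by
        rw [setIntegral_const, Real.volume_real_Ioc, smul_eq_mul]
        rw [max_eq_left (by linarith)]
        ring

theorem stmt17 {X : Type*}
    [MetricSpace X] [PolishSpace X] [MeasurableSpace X] [BorelSpace X]
    (μ : ℕ → Measure X) [∀ n, IsProbabilityMeasure (μ n)]
    -- total variation convergence μₙ → μ₀
    (hTV : Tendsto (fun n => ⨆ s : {s : Set X // MeasurableSet s},
        |((μ n) s.1).toReal - ((μ 0) s.1).toReal|) atTop (𝓝 0))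
    (T : ℕ → X → X) (hT : ∀ n, Measurable (T n))
    -- convergence of Tₙ to T₀ in measure μ₀
    (hmeas : ∀ δ : ℝ, 0 < δ →
      Tendsto (fun n => (μ 0) {x | δ ≤ dist (T n x) (T 0 x)}) atTop (𝓝 0)) :
    -- weak convergence of the plans σₙ = (id, Tₙ)_*μₙ to σ₀ = (id, T₀)_*μ₀
    ∀ f : BoundedContinuousFunction (X × X) ℝ,
      Tendsto (fun n => ∫ p, f p ∂((μ n).map (fun x => (x, T n x))))
        atTop (𝓝 (∫ p, f p ∂((μ 0).map (fun x => (x, T 0 x))))) := by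
  intro f
  have hmble : ∀ n, Measurable fun x => (x, T n x) := fun n => measurable_id.prodMk (hT n)
  have hg : ∀ n, Measurable fun x => f (x, T n x) := fun n => f.continuous.measurable.comp (hmble n)
  have hrw : ∀ n, ∫ p, f p ∂((μ n).map (fun x => (x, T n x))) = ∫ x, f (x, T n x) ∂(μ n) :=
    fun n => integral_map (hmble n).aemeasurable f.continuous.aestronglyMeasurable
  simp only [hrw]
  have hbnd : ∀ n x, |f (x, T n x)| ≤ ‖f‖ := fun n x => by
    simpa [Real.norm_eq_abs] using f.norm_coe_le_norm (x, T n x)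
  have hB : Tendsto (fun n => ∫ x, f (x, T n x) ∂(μ 0)) atTop
      (𝓝 (∫ x, f (x, T 0 x) ∂(μ 0))) := by
    apply tendsto_of_subseq_tendsto
    intro ns hns
    have hTIM : TendstoInMeasure (μ 0) (fun k => T (ns k)) atTop (T 0) :=
      tendstoInMeasure_iff_dist.mpr fun ε hε => (hmeas ε hε).comp hns
    obtain ⟨ms, -, hae⟩ := hTIM.exists_seq_tendsto_ae
    refine ⟨ms, ?_⟩
    refine tendsto_integral_of_dominated_convergence (fun _ => ‖f‖)
      (fun k => (hg _).aestronglyMeasurable) (integrable_const _)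
      (fun k => Eventually.of_forall fun x => by simpa [Real.norm_eq_abs] using hbnd _ x) ?_
    filter_upwards [hae] with x hx
    exact (f.continuous.tendsto _).comp (tendsto_const_nhds.prodMk_nhds hx)
  have hA : Tendsto (fun n => ∫ x, f (x, T n x) ∂(μ n) - ∫ x, f (x, T n x) ∂(μ 0))
      atTop (𝓝 0) := by
    apply squeeze_zero_norm (fun n => ?_) (by simpa using hTV.const_mul (2 * ‖f‖))
    rw [Real.norm_eq_abs]
    exact tv_bound (μ n) (μ 0) _ (hg n) ‖f‖ (norm_nonneg f) (hbnd n)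
  simpa using hA.add hB
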